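/- Let F be an n-uniform hypergraph in which every hyperedge has nonempty intersection with at most D other hyperedges, where (D+1) ≤ 2^(n-1)/e (e Euler's number). Then F has a proper 2-coloring, i.e., a red/blue vertex coloring with no monochromatic hyperedge. -/

import Mathlib

namespace ELAux
variable {V : Type} [DecidableEq V]

def mono (f A : Finset V) : Prop := f ⊆ A ∨ f ∩ A = ∅

instance (f A : Finset V) : Decidable (mono f A) := by unfold mono; infer_instance

def good (S : Finset V) (T : Finset (Finset V)) : Finset (Finset V) :=
  S.powerset.filter fun A => ∀ f ∈ T, ¬ mono f A

def bg (S e : Finset V) (T : Finset (Finset V)) : Finset (Finset V) :=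
  S.powerset.filter fun A => mono e A ∧ ∀ f ∈ T, ¬ mono f A

lemma partition (S f : Finset V) (T : Finset (Finset V)) :
    (good S T).card = (good S (insert f T)).card + (bg S f T).card := by
  have h1 : good S (insert f T) = (good S T).filter (fun A => ¬ mono f A) := by
    ext A
    simp only [good, Finset.mem_filter, Finset.forall_mem_insert]
    tauto
  have h2 : bg S f T = (good S T).filter (fun A => mono f A) := by
    ext A
    simp only [bg, good, Finset.mem_filter]
    tauto
  rw [h1, h2, Nat.add_comm]
  exact (Finset.card_filter_add_card_filter_not (fun A => mono f A)).symm

lemma card_split (s t : Finset V) (hst : Disjoint s t)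
    (p q : Finset V → Prop) [DecidablePred p] [DecidablePred q] :
    ((s ∪ t).powerset.filter fun A => p (A ∩ s) ∧ q (A ∩ t)).card
      = (s.powerset.filter p).card * (t.powerset.filter q).card := by
  rw [← Finset.card_product]
  apply Finset.card_bij' (fun A _ => (A ∩ s, A ∩ t)) (fun B _ => B.1 ∪ B.2)
  · intro A hA
    simp only [Finset.mem_filter, Finset.mem_powerset] at hA
    simp only [Finset.mem_product, Finset.mem_filter, Finset.mem_powerset]
    exact ⟨⟨Finset.inter_subset_right, hA.2.1⟩, Finset.inter_subset_right, hA.2.2⟩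
  · intro B hB
    simp only [Finset.mem_product, Finset.mem_filter, Finset.mem_powerset] at hB
    have h1 : B.1 ∩ s = B.1 := Finset.inter_eq_left.mpr hB.1.1
    have h2 : B.2 ∩ t = B.2 := Finset.inter_eq_left.mpr hB.2.1
    have h1t : B.1 ∩ t = ∅ := by
      apply Finset.eq_empty_of_forall_notMem
      intro x hx
      simp only [Finset.mem_inter] at hx
      exact (Finset.disjoint_left.mp hst) (hB.1.1 hx.1) hx.2
    have h2s : B.2 ∩ s = ∅ := by
      apply Finset.eq_empty_of_forall_notMem
      intro x hx
      simp only [Finset.mem_inter] at hx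
      exact (Finset.disjoint_left.mp hst) hx.2 (hB.2.1 hx.1)
    simp only [Finset.mem_filter, Finset.mem_powerset, Finset.union_inter_distrib_right,
      h1, h2, h1t, h2s, Finset.union_empty, Finset.empty_union]
    exact ⟨Finset.union_subset_union hB.1.1 hB.2.1, hB.1.2, hB.2.2⟩
  · intro A hA
    simp only [Finset.mem_filter, Finset.mem_powerset] at hA
    rw [← Finset.inter_union_distrib_left, Finset.inter_eq_left.mpr hA.1]
  · intro B hB
    simp only [Finset.mem_product, Finset.mem_filter, Finset.mem_powerset] at hB
    have h1 : B.1 ∩ s = B.1 := Finset.inter_eq_left.mpr hB.1.1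
    have h2 : B.2 ∩ t = B.2 := Finset.inter_eq_left.mpr hB.2.1
    have h1t : B.1 ∩ t = ∅ := by
      apply Finset.eq_empty_of_forall_notMem
      intro x hx
      simp only [Finset.mem_inter] at hx
      exact (Finset.disjoint_left.mp hst) (hB.1.1 hx.1) hx.2
    have h2s : B.2 ∩ s = ∅ := by
      apply Finset.eq_empty_of_forall_notMem
      intro x hx
      simp only [Finset.mem_inter] at hx
      exact (Finset.disjoint_left.mp hst) hx.2 (hB.2.1 hx.1)
    ext <;> simp [Finset.union_inter_distrib_right, h1, h2, h1t, h2s]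

lemma mono_inter_right {f A t : Finset V} (hft : f ⊆ t) : mono f A ↔ mono f (A ∩ t) := by
  unfold mono
  have h1 : f ⊆ A ↔ f ⊆ A ∩ t := by
    constructor
    · intro h; exact Finset.subset_inter h hft
    · intro h; exact h.trans Finset.inter_subset_left
  have h2 : f ∩ A = f ∩ (A ∩ t) := by
    ext x
    simp only [Finset.mem_inter]
    exact ⟨fun h => ⟨h.1, h.2, hft h.1⟩, fun h => ⟨h.1, h.2.1⟩⟩
  rw [h1, h2]

lemma bg_good_count (S e : Finset V) (T : Finset (Finset V)) (heS : e ⊆ S) (he : e.Nonempty)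
    (hT : ∀ f ∈ T, f ⊆ S ∧ f ∩ e = ∅) :
    (bg S e T).card = 2 * (((S \ e).powerset.filter
        (fun C => ∀ f ∈ T, ¬ mono f C)).card) ∧
    (good S T).card = 2 ^ e.card * (((S \ e).powerset.filter
        (fun C => ∀ f ∈ T, ¬ mono f C)).card) := by
  have hS : e ∪ (S \ e) = S := Finset.union_sdiff_of_subset heS
  have hd : Disjoint e (S \ e) := Finset.disjoint_sdiff
  have hfsub : ∀ f ∈ T, f ⊆ S \ e := by
    intro f hf
    obtain ⟨h1, h2⟩ := hT f hf
    intro x hx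
    simp only [Finset.mem_sdiff]
    refine ⟨h1 hx, fun hxe => ?_⟩
    have : x ∈ f ∩ e := Finset.mem_inter.mpr ⟨hx, hxe⟩
    simp [h2] at this
  have hQ : ∀ A : Finset V, (∀ f ∈ T, ¬ mono f A) ↔ (∀ f ∈ T, ¬ mono f (A ∩ (S \ e))) := by
    intro A
    exact forall₂_congr fun f hf => not_congr (mono_inter_right (hfsub f hf))
  have hmonoe : ∀ A : Finset V, mono e A ↔ mono e (A ∩ e) :=
    fun A => mono_inter_right (Finset.Subset.refl e)
  have hmcard : (e.powerset.filter (fun B => mono e B)).card = 2 := by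
    have : e.powerset.filter (fun B => mono e B) = {e, ∅} := by
      ext B
      simp only [Finset.mem_filter, Finset.mem_powerset, Finset.mem_insert,
        Finset.mem_singleton]
      unfold mono
      constructor
      · rintro ⟨hBe, h | h⟩
        · exact Or.inl (Finset.Subset.antisymm hBe h)
        · rw [Finset.inter_eq_right.mpr hBe] at h; exact Or.inr h
      · rintro (rfl | rfl)
        · exact ⟨Finset.Subset.refl B, Or.inl (Finset.Subset.refl B)⟩
        · simp
    rw [this]
    rw [Finset.card_insert_of_notMem (by simp [Finset.ne_empty_of_mem he.choose_spec]), Finset.card_singleton]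
  constructor
  · have key : bg S e T = (e ∪ (S \ e)).powerset.filter
        (fun A => mono e (A ∩ e) ∧ ∀ f ∈ T, ¬ mono f (A ∩ (S \ e))) := by
      rw [hS]
      unfold bg
      apply Finset.filter_congr
      intro A _
      rw [← hmonoe A, ← hQ A]
    rw [key]
    exact (card_split e (S \ e) hd (fun B => mono e B)
      (fun C => ∀ f ∈ T, ¬ mono f C)).trans (by rw [hmcard])
  · have key : good S T = (e ∪ (S \ e)).powerset.filter
        (fun A => (fun _ => True) (A ∩ e) ∧ ∀ f ∈ T, ¬ mono f (A ∩ (S \ e))) := by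
      rw [hS]
      unfold good
      apply Finset.filter_congr
      intro A _
      simp only [true_and]
      exact hQ A
    rw [key]
    exact (card_split e (S \ e) hd (fun _ => True)
      (fun C => ∀ f ∈ T, ¬ mono f C)).trans (by
        rw [Finset.filter_true_of_mem (fun _ _ => trivial), Finset.card_powerset])
lemma exp_bound (D : ℕ) : Real.exp (-1) ≤ ((D : ℝ) / (D + 1)) ^ D := by
  rcases Nat.eq_zero_or_pos D with h | h
  · subst h
    simp only [pow_zero]
    rw [← Real.exp_zero]
    exact Real.exp_le_exp.mpr (by norm_num)
  · have hD0 : (0:ℝ) < D := by exact_mod_cast h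
    have h1 : (1 / (D:ℝ) + 1) ≤ Real.exp (1 / D) := Real.add_one_le_exp _
    have h2 : ((D:ℝ) + 1) / D = 1 / D + 1 := by field_simp; ring
    have h3 : (((D:ℝ) + 1) / D) ^ D ≤ Real.exp 1 := by
      calc (((D:ℝ) + 1) / D) ^ D ≤ (Real.exp (1 / D)) ^ D := by
            apply pow_le_pow_left₀ (by positivity) (by rw [h2]; exact h1)
        _ = Real.exp ((D : ℝ) * (1 / D)) := by rw [Real.exp_nat_mul]
        _ = Real.exp 1 := by rw [mul_one_div, div_self (ne_of_gt hD0)]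
  -- invert
    have h4 : (0:ℝ) < (((D:ℝ) + 1) / D) ^ D := by positivity
    have h5 : ((D:ℝ) / (D + 1)) ^ D = ((((D:ℝ) + 1) / D) ^ D)⁻¹ := by
      rw [← inv_pow, inv_div]
    rw [h5, Real.exp_neg]
    exact inv_anti₀ h4 h3


lemma step (n D : ℕ) (E : Finset (Finset V)) (S : Finset V) (x : ℝ)
    (hS : ∀ e ∈ E, e ⊆ S)
    (hunif : ∀ e ∈ E, e.card = n)
    (hn : 3 ≤ n)
    (hnbhd : ∀ e ∈ E, (E.filter fun f => f ≠ e ∧ (e ∩ f).Nonempty).card ≤ D)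
    (hx : x = Real.exp 1 * (2 / 2 ^ n))
    (hxD : x * ((D : ℝ) + 1) ≤ 1)
    (T : Finset (Finset V)) (hTE : T ⊆ E) (e : Finset V) (he : e ∈ E)
    (IH : ∀ T' ⊆ E, T'.card < T.card → ∀ f ∈ E,
      ((bg S f T').card : ℝ) ≤ x * (good S T').card) :
    ((bg S e T).card : ℝ) ≤ x * (good S T).card := by
  have hDpos : (0:ℝ) ≤ (D:ℝ) := Nat.cast_nonneg D
  have hxpos : 0 < x := by rw [hx]; positivity
  have hx1 : x ≤ 1 / ((D:ℝ) + 1) := by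
    rw [le_div_iff₀ (by positivity)]; linarith
  have h1x : (0:ℝ) ≤ 1 - x := by
    have h : (1:ℝ) / ((D:ℝ)+1) ≤ 1 := by
      rw [div_le_one (by positivity)]; linarith
    linarith
  have hDx : (D:ℝ)/((D:ℝ)+1) ≤ 1 - x := by
    have h : 1 - (D:ℝ)/((D:ℝ)+1) = 1/((D:ℝ)+1) := by field_simp; ring
    linarith
  by_cases heT : e ∈ T
  · have hempty : bg S e T = ∅ := by
      apply Finset.eq_empty_of_forall_notMem
      intro A hA
      simp only [bg, Finset.mem_filter] at hA
      exact hA.2.2 e heT hA.2.1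
    rw [hempty]
    simp only [Finset.card_empty, Nat.cast_zero]
    positivity
  · set T1 := T.filter (fun f => (e ∩ f).Nonempty) with hT1def
    set T2 := T.filter (fun f => ¬ (e ∩ f).Nonempty) with hT2def
    have hT12 : T1 ∪ T2 = T := Finset.filter_union_filter_not_eq (p := fun f => (e ∩ f).Nonempty) T
    have hT2T : T2 ⊆ T := Finset.filter_subset _ T
    have hT1D : T1.card ≤ D := by
      refine le_trans (Finset.card_le_card ?_) (hnbhd e he)
      intro f hf
      simp only [hT1def, Finset.mem_filter] at hf
      simp only [Finset.mem_filter]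
      exact ⟨hTE hf.1, fun hfe => heT (hfe ▸ hf.1), hf.2⟩
    have hbg2 : ((bg S e T).card : ℝ) ≤ (bg S e T2).card := by
      have hsub : bg S e T ⊆ bg S e T2 := by
        intro A hA
        simp only [bg, Finset.mem_filter] at hA ⊢
        exact ⟨hA.1, hA.2.1, fun f hf => hA.2.2 f (hT2T hf)⟩
      exact_mod_cast Finset.card_le_card hsub
    have hecard : e.card = n := hunif e he
    have hene : e.Nonempty := Finset.card_pos.mp (by rw [hecard]; omega)
    obtain ⟨hbgc, hgc⟩ := bg_good_count S e T2 (hS e he) hene (by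
      intro f hf
      have hfT : f ∈ T := hT2T hf
      refine ⟨hS f (hTE hfT), ?_⟩
      simp only [hT2def, Finset.mem_filter] at hf
      rw [Finset.inter_comm]
      exact Finset.not_nonempty_iff_eq_empty.mp hf.2)
    set M := ((S \ e).powerset.filter (fun C => ∀ f ∈ T2, ¬ mono f C)).card with hMdef
    have hbgR : ((bg S e T2).card : ℝ) = 2 * M := by exact_mod_cast hbgc
    have hgR : ((good S T2).card : ℝ) = 2 ^ n * M := by
      rw [hecard] at hgc; exact_mod_cast hgc
    have h2n : (0:ℝ) < 2 ^ n := by positivity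
    have hbg_eq : ((bg S e T2).card : ℝ) = 2 / 2 ^ n * (good S T2).card := by
      rw [hbgR, hgR]; field_simp
    -- peeling
    have peel : ∀ U : Finset (Finset V), U ⊆ T1 →
        (1 - x) ^ U.card * ((good S T2).card : ℝ) ≤ (good S (T2 ∪ U)).card := by
      intro U
      induction U using Finset.induction_on with
      | empty => intro _; simp
      | @insert f U hfU ihU =>
        intro hins
        have hfT1 : f ∈ T1 := hins (Finset.mem_insert_self f U)
        have hUT1 : U ⊆ T1 := (Finset.insert_subset_iff.mp hins).2
        have hfT : f ∈ T := Finset.mem_of_mem_filter f hfT1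
        have hfE : f ∈ E := hTE hfT
        have hfnot : f ∉ T2 ∪ U := by
          simp only [Finset.mem_union]
          rintro (h | h)
          · simp only [hT2def, Finset.mem_filter] at h
            simp only [hT1def, Finset.mem_filter] at hfT1
            exact h.2 hfT1.2
          · exact hfU h
        have hsub : T2 ∪ U ⊆ T :=
          Finset.union_subset hT2T (hUT1.trans (Finset.filter_subset _ T))
        have hlt : (T2 ∪ U).card < T.card := by
          apply Finset.card_lt_card
          rw [Finset.ssubset_iff_of_subset hsub]
          exact ⟨f, hfT, hfnot⟩
        have hIH := IH (T2 ∪ U) (hsub.trans hTE) hlt f hfE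
        have hpartR : ((good S (T2 ∪ U)).card : ℝ)
            = (good S (insert f (T2 ∪ U))).card + (bg S f (T2 ∪ U)).card := by
          exact_mod_cast partition S f (T2 ∪ U)
        have hins_eq : T2 ∪ insert f U = insert f (T2 ∪ U) := by rw [Finset.union_insert]
        rw [hins_eq, Finset.card_insert_of_notMem hfU, pow_succ]
        calc (1-x) ^ U.card * (1-x) * ((good S T2).card : ℝ)
            = (1-x) * ((1-x) ^ U.card * (good S T2).card) := by ring
          _ ≤ (1-x) * ((good S (T2 ∪ U)).card : ℝ) :=
              mul_le_mul_of_nonneg_left (ihU hUT1) h1x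
          _ ≤ ((good S (insert f (T2 ∪ U))).card : ℝ) := by nlinarith
    have hpeel := peel T1 (Finset.Subset.refl T1)
    have hTeq : T2 ∪ T1 = T := by rw [Finset.union_comm]; exact hT12
    rw [hTeq] at hpeel
    -- exp bound
    have hd1 : (0:ℝ) ≤ (D:ℝ)/((D:ℝ)+1) := by positivity
    have hd2 : (D:ℝ)/((D:ℝ)+1) ≤ 1 := by
      rw [div_le_one (by positivity)]; linarith
    have hexp : Real.exp (-1) ≤ (1 - x) ^ T1.card := by
      calc Real.exp (-1) ≤ ((D:ℝ)/((D:ℝ)+1)) ^ D := exp_bound D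
        _ ≤ ((D:ℝ)/((D:ℝ)+1)) ^ T1.card := pow_le_pow_of_le_one hd1 hd2 hT1D
        _ ≤ (1-x) ^ T1.card := pow_le_pow_left₀ hd1 hDx _
    have hxe : x * Real.exp (-1) = 2 / 2 ^ n := by
      have h : Real.exp 1 * Real.exp (-1) = 1 := by
        rw [← Real.exp_add]; norm_num
      rw [hx, mul_right_comm, h, one_mul]
    have hg2 : (0:ℝ) ≤ ((good S T2).card : ℝ) := Nat.cast_nonneg _
    calc ((bg S e T).card : ℝ) ≤ ((bg S e T2).card : ℝ) := hbg2
      _ = 2 / 2 ^ n * (good S T2).card := hbg_eq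
      _ = x * (Real.exp (-1) * (good S T2).card) := by rw [← hxe]; ring
      _ ≤ x * ((1-x) ^ T1.card * (good S T2).card) :=
          mul_le_mul_of_nonneg_left (mul_le_mul_of_nonneg_right hexp hg2) hxpos.le
      _ ≤ x * ((good S T).card : ℝ) := mul_le_mul_of_nonneg_left hpeel hxpos.le

lemma main_claim (n D : ℕ) (E : Finset (Finset V)) (S : Finset V) (x : ℝ)
    (hS : ∀ e ∈ E, e ⊆ S)
    (hunif : ∀ e ∈ E, e.card = n)
    (hn : 3 ≤ n)
    (hnbhd : ∀ e ∈ E, (E.filter fun f => f ≠ e ∧ (e ∩ f).Nonempty).card ≤ D)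
    (hx : x = Real.exp 1 * (2 / 2 ^ n))
    (hxD : x * ((D : ℝ) + 1) ≤ 1) :
    ∀ (k : ℕ) (T : Finset (Finset V)), T.card ≤ k → T ⊆ E → ∀ e ∈ E,
      ((bg S e T).card : ℝ) ≤ x * (good S T).card := by
  intro k
  induction k with
  | zero =>
    intro T hcard hTE e he
    exact step n D E S x hS hunif hn hnbhd hx hxD T hTE e he
      (fun T' _ hlt _ _ => absurd hlt (by omega))
  | succ k ih =>
    intro T hcard hTE e he
    exact step n D E S x hS hunif hn hnbhd hx hxD T hTE e he
      (fun T' hT'E hlt f hf => ih T' (by omega) hT'E f hf)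

lemma good_pos (n D : ℕ) (E : Finset (Finset V)) (S : Finset V) (x : ℝ)
    (hx1 : x < 1)
    (claim : ∀ T ⊆ E, ∀ e ∈ E, ((bg S e T).card : ℝ) ≤ x * (good S T).card) :
    ∀ T ⊆ E, 0 < (good S T).card := by
  intro T
  induction T using Finset.induction_on with
  | empty =>
    intro _
    apply Finset.card_pos.mpr
    exact ⟨∅, by simp [good]⟩
  | @insert f T hfT ihT =>
    intro hins
    have hTE : T ⊆ E := (Finset.insert_subset_iff.mp hins).2
    have hfE : f ∈ E := hins (Finset.mem_insert_self f T)
    have hpos := ihT hTE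
    have hbg := claim T hTE f hfE
    have hpartR : ((good S T).card : ℝ)
        = (good S (insert f T)).card + (bg S f T).card := by
      exact_mod_cast partition S f T
    have hposR : (0:ℝ) < (good S T).card := by exact_mod_cast hpos
    have : (0:ℝ) < (good S (insert f T)).card := by nlinarith
    exact_mod_cast this
end ELAux

open ELAux

/-- Erdős–Lovász 2-coloring theorem: if every hyperedge of an `n`-uniform
hypergraph meets at most `D` other hyperedges and `e·(D+1) ≤ 2^(n-1)`, then the
hypergraph has a proper 2-coloring. -/
theorem erdos_lovasz_two_coloring {V : Type} [DecidableEq V]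
    (n D : ℕ) (E : Finset (Finset V))
    (hunif : ∀ e ∈ E, e.card = n)
    (hnbhd : ∀ e ∈ E, (E.filter fun f => f ≠ e ∧ (e ∩ f).Nonempty).card ≤ D)
    (hD : ((D : ℝ) + 1) ≤ (2 : ℝ) ^ (n - 1) / Real.exp 1) :
    ∃ c : V → Bool, ∀ e ∈ E, ∃ v ∈ e, ∃ w ∈ e, c v ≠ c w := by
  have hexp2 : (2:ℝ) < Real.exp 1 := by
    have := Real.exp_one_gt_d9
    norm_num at this ⊢
    linarith
  have hexp3 : Real.exp 1 < 3 := by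
    have := Real.exp_one_lt_d9
    norm_num at this ⊢
    linarith
  have hDge : (1:ℝ) ≤ (D:ℝ) + 1 := by
    have := Nat.cast_nonneg (α := ℝ) D
    linarith
  have hn : 3 ≤ n := by
    by_contra hlt
    push_neg at hlt
    have h1 : n - 1 ≤ 1 := by omega
    have h2 : (2:ℝ) ^ (n-1) ≤ 2 ^ 1 := by
      apply pow_le_pow_right₀ (by norm_num) h1
    have h3 : (2:ℝ) ^ (n-1) / Real.exp 1 < 1 := by
      rw [div_lt_one (Real.exp_pos 1)]
      calc (2:ℝ) ^ (n-1) ≤ 2 ^ 1 := h2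
        _ = 2 := by norm_num
        _ < Real.exp 1 := hexp2
    linarith
  set S : Finset V := E.sup id with hSdef
  have hS : ∀ e ∈ E, e ⊆ S := fun e he => Finset.le_sup (f := id) he
  set x : ℝ := Real.exp 1 * (2 / 2 ^ n) with hxdef
  have h2n1 : (2:ℝ) ^ (n-1) * 2 = 2 ^ n := by
    rw [← pow_succ]
    congr 1
    omega
  have h2npos : (0:ℝ) < 2 ^ n := by positivity
  have hxD : x * ((D : ℝ) + 1) ≤ 1 := by
    have h1 : Real.exp 1 * ((D:ℝ) + 1) ≤ 2 ^ (n-1) := by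
      rw [← le_div_iff₀' (Real.exp_pos 1)]
      exact hD
    calc x * ((D:ℝ) + 1) = Real.exp 1 * ((D:ℝ)+1) * 2 / 2 ^ n := by
          rw [hxdef]; ring
      _ ≤ 2 ^ (n-1) * 2 / 2 ^ n := by
          gcongr
      _ = 1 := by rw [h2n1]; field_simp
  have h8 : (8:ℝ) ≤ 2 ^ n := by
    calc (8:ℝ) = 2 ^ 3 := by norm_num
      _ ≤ 2 ^ n := pow_le_pow_right₀ (by norm_num) hn
  have hx1 : x < 1 := by
    rw [hxdef, show Real.exp 1 * (2 / 2 ^ n) = Real.exp 1 * 2 / 2 ^ n by ring,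
      div_lt_one h2npos]
    nlinarith
  have claim : ∀ T ⊆ E, ∀ e ∈ E, ((bg S e T).card : ℝ) ≤ x * (good S T).card :=
    fun T hTE e he => main_claim n D E S x hS hunif hn hnbhd hxdef hxD T.card T le_rfl hTE e he
  have hpos : 0 < (good S E).card :=
    good_pos n D E S x hx1 claim E (Finset.Subset.refl E)
  obtain ⟨A, hA⟩ := Finset.card_pos.mp hpos
  simp only [good, Finset.mem_filter, Finset.mem_powerset] at hA
  refine ⟨fun v => decide (v ∈ A), fun e he => ?_⟩
  have hnm := hA.2 e he
  simp only [mono, not_or] at hnm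
  obtain ⟨hns, hni⟩ := hnm
  obtain ⟨v, hv, hvA⟩ := Finset.not_subset.mp hns
  obtain ⟨w, hw⟩ := Finset.nonempty_iff_ne_empty.mpr hni
  simp only [Finset.mem_inter] at hw
  exact ⟨v, hv, w, hw.1, by simp [hvA, hw.2]⟩
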